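/- Fix τ, γ ∈ [0,∞) with 3τγ² ≤ 1. Then for all ζ ∈ [0,∞), 2τ − 2τ·(1 + γ√3·ζ)·exp(−γ√3·ζ) ≤ ζ². Conversely, if 3τγ² > 1 then there exists ζ > 0 with 2τ − 2τ·(1 + γ√3·ζ)·exp(−γ√3·ζ) > ζ². -/

import Mathlib

open Real

lemma lemA (x : ℝ) (hx : 0 ≤ x) : 1 - (1+x)*Real.exp (-x) ≤ x^2/2 := by
  set f : ℝ → ℝ := fun t => t^2/2 - 1 + (1+t)*Real.exp (-t) with hf
  have hd : ∀ t : ℝ, HasDerivAt f (t * (1 - Real.exp (-t))) t := by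
    intro t
    have h1 : HasDerivAt (fun t : ℝ => Real.exp (-t)) (-Real.exp (-t)) t := by
      simpa [Function.comp_def] using (Real.hasDerivAt_exp (-t)).comp t ((hasDerivAt_id t).neg)
    have h2 : HasDerivAt (fun t : ℝ => (1+t)*Real.exp (-t))
        (1 * Real.exp (-t) + (1+t) * (-Real.exp (-t))) t :=
      ((hasDerivAt_id t).const_add 1).mul h1
    have h3 : HasDerivAt (fun t : ℝ => t^2/2 - 1) t t := by
      have := (hasDerivAt_pow 2 t).div_const 2
      simpa using this.sub_const 1
    have := h3.add h2
    exact this.congr_deriv (by ring)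
  have hmono : MonotoneOn f (Set.Ici (0:ℝ)) := by
    apply monotoneOn_of_deriv_nonneg (convex_Ici 0)
    · exact fun t _ => ((hd t).continuousAt).continuousWithinAt
    · exact fun t _ => ((hd t).differentiableAt).differentiableWithinAt
    · intro t ht
      rw [(hd t).deriv]
      simp only [interior_Ici, Set.mem_Ioi] at ht
      have : Real.exp (-t) ≤ 1 := by
        rw [Real.exp_le_one_iff]; linarith
      nlinarith
  have h0 : f 0 = 0 := by simp [hf]
  have := hmono (Set.self_mem_Ici) hx hx
  rw [h0] at this
  simp only [hf] at this
  linarith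

lemma lemB (x : ℝ) (hx : 0 ≤ x) : x^2/2 - x^3/3 ≤ 1 - (1+x)*Real.exp (-x) := by
  set f : ℝ → ℝ := fun t => 1 - (1+t)*Real.exp (-t) - t^2/2 + t^3/3 with hf
  have hd : ∀ t : ℝ, HasDerivAt f (t * (Real.exp (-t) - 1 + t)) t := by
    intro t
    have h1 : HasDerivAt (fun t : ℝ => Real.exp (-t)) (-Real.exp (-t)) t := by
      simpa [Function.comp_def] using (Real.hasDerivAt_exp (-t)).comp t ((hasDerivAt_id t).neg)
    have h2 : HasDerivAt (fun t : ℝ => (1+t)*Real.exp (-t))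
        (1 * Real.exp (-t) + (1+t) * (-Real.exp (-t))) t :=
      ((hasDerivAt_id t).const_add 1).mul h1
    have h3 : HasDerivAt (fun t : ℝ => t^2/2) t t := by
      simpa using (hasDerivAt_pow 2 t).div_const 2
    have h4 : HasDerivAt (fun t : ℝ => t^3/3) (t^2) t := by
      simpa using (hasDerivAt_pow 3 t).div_const 3
    have := (((hasDerivAt_const t (1:ℝ)).sub h2).sub h3).add h4
    exact this.congr_deriv (by ring)
  have hmono : MonotoneOn f (Set.Ici (0:ℝ)) := by
    apply monotoneOn_of_deriv_nonneg (convex_Ici 0)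
    · exact fun t _ => ((hd t).continuousAt).continuousWithinAt
    · exact fun t _ => ((hd t).differentiableAt).differentiableWithinAt
    · intro t ht
      rw [(hd t).deriv]
      simp only [interior_Ici, Set.mem_Ioi] at ht
      have : (-t) + 1 ≤ Real.exp (-t) := Real.add_one_le_exp (-t)
      nlinarith
  have h0 : f 0 = 0 := by simp [hf]
  have := hmono (Set.self_mem_Ici) hx hx
  rw [h0] at this
  simp only [hf] at this
  linarith

theorem matern_zero_delta_viability (τ γ : ℝ) (hτ : 0 ≤ τ) (hγ : 0 ≤ γ) :
    (3 * τ * γ ^ 2 ≤ 1 →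
      ∀ ζ : ℝ, 0 ≤ ζ →
        2 * τ - 2 * τ * (1 + γ * Real.sqrt 3 * ζ) * Real.exp (-(γ * Real.sqrt 3 * ζ)) ≤ ζ ^ 2) ∧
    (3 * τ * γ ^ 2 > 1 →
      ∃ ζ : ℝ, 0 < ζ ∧
        2 * τ - 2 * τ * (1 + γ * Real.sqrt 3 * ζ) * Real.exp (-(γ * Real.sqrt 3 * ζ)) > ζ ^ 2) := by
  have hs3 : (Real.sqrt 3)^2 = 3 := Real.sq_sqrt (by norm_num)
  have hs3pos : (0:ℝ) < Real.sqrt 3 := Real.sqrt_pos.mpr (by norm_num)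
  constructor
  · intro h ζ hζ
    set x := γ * Real.sqrt 3 * ζ with hx
    have hx0 : 0 ≤ x := by positivity
    have hA := lemA x hx0
    have hx2 : x^2 = 3 * γ^2 * ζ^2 := by
      rw [hx, show (γ*Real.sqrt 3*ζ)^2 = γ^2*(Real.sqrt 3)^2*ζ^2 from by ring, hs3]; ring
    nlinarith [mul_le_mul_of_nonneg_left hA (by linarith : (0:ℝ) ≤ 2*τ),
      mul_le_mul_of_nonneg_right h (sq_nonneg ζ)]
  · intro h
    have hτ0 : 0 < τ := by nlinarith [sq_nonneg γ]
    have hγ0 : 0 < γ := by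
      rcases lt_or_eq_of_le hγ with h' | h'
      · exact h'
      · exfalso; rw [← h'] at h; simp at h; linarith
    set a := γ * Real.sqrt 3 with ha
    have ha0 : 0 < a := by positivity
    have ha2 : a^2 = 3 * γ^2 := by
      rw [ha, show (γ*Real.sqrt 3)^2 = γ^2*(Real.sqrt 3)^2 from by ring, hs3]; ring
    set c := 3 * τ * γ^2 - 1 with hc
    have hc0 : 0 < c := by simp [hc]; linarith
    refine ⟨3 * c / (4 * τ * a^3), by positivity, ?_⟩
    set ζ := 3 * c / (4 * τ * a^3) with hζdef
    have hζ0 : 0 < ζ := by positivity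
    set x := a * ζ with hx
    have hx0 : 0 ≤ x := by positivity
    have hB := lemB x hx0
    have hB' := mul_le_mul_of_nonneg_left hB (le_of_lt hτ0)
    have hkey : 2 * τ * a^3 * ζ = 3 * c / 2 := by
      rw [hζdef]; field_simp; ring
    have hx2 : x^2 = a^2 * ζ^2 := by rw [hx]; ring
    have hx3 : x^3 = a^3 * ζ^3 := by rw [hx]; ring
    have hτa2 : τ * a^2 = 1 + c := by rw [ha2, hc]; ring
    have h5 : 2*τ*a^3*ζ^3 = 3*c/2*ζ^2 := by
      rw [show 2*τ*a^3*ζ^3 = 2*τ*a^3*ζ*ζ^2 from by ring, hkey]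
    have h6 : τ*a^2*ζ^2 = (1+c)*ζ^2 := by rw [hτa2]
    nlinarith [hB', hx2, hx3, h5, h6, mul_pos hc0 (mul_pos hζ0 hζ0)]
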